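/- Let n ≥ 3 be odd and let D_{2n} = ⟨a, b | aⁿ = b² = 1, b⁻¹ab = a⁻¹⟩ be the dihedral group of order 2n. Then every proper normal subgroup of D_{2n} is contained in ⟨a⟩, and D_{2n} is X-decomposable for X = {(d+1)/2 : d a positive divisor of n}. -/

import Mathlib

/-- `ncc A` is the number of conjugacy classes of `G` contained in the subgroup `A`. -/
noncomputable def ncc {G : Type*} [Group G] (A : Subgroup G) : ℕ :=
  Nat.card {c : ConjClasses G // c.carrier ⊆ (A : Set G)}

/-- `KG G` is the set of values `ncc A` for `A` a proper normal subgroup of `G`. -/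
def KG (G : Type*) [Group G] : Set ℕ :=
  {n | ∃ A : Subgroup G, A.Normal ∧ A ≠ ⊤ ∧ ncc A = n}

/-- `G` is `X`-decomposable if `KG G = X`. -/
def XDecomposable (G : Type*) [Group G] (X : Set ℕ) : Prop := KG G = X


section Aux

open DihedralGroup

variable {n : ℕ}

lemma r_inv (i : ZMod n) : (r i)⁻¹ = r (-i) := rfl
lemma sr_inv' (i : ZMod n) : (sr i)⁻¹ = sr i := rfl

lemma isConj_r_iff (i : ZMod n) (x : DihedralGroup n) :
    IsConj (r i) x ↔ x = r i ∨ x = r (-i) := by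
  constructor
  · rintro ⟨⟨g, g', h1, h2⟩, hg⟩
    simp only [SemiconjBy] at hg
    rcases g with j | j <;> rcases x with k | k <;>
      simp only [r_mul_r, r_mul_sr, sr_mul_r, sr_mul_sr, r.injEq, sr.injEq] at hg ⊢
    · left; linear_combination -hg
    · exact absurd hg (by simp)
    · right; linear_combination hg
    · exact absurd hg (by simp)
  · rintro (rfl | rfl)
    · exact IsConj.refl _
    · exact isConj_iff.2 ⟨sr 0, by simp [sr_inv']⟩

lemma carrier_mk_r (i : ZMod n) :
    (ConjClasses.mk (r i)).carrier = {r i, r (-i)} := by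
  ext x
  rw [ConjClasses.mem_carrier_iff_mk_eq, ConjClasses.mk_eq_mk_iff_isConj, isConj_comm,
    isConj_r_iff]
  rfl

/-- The subgroup of rotations `r i` with `i` in an additive subgroup `T` of `ZMod n`. -/
def rsub (T : AddSubgroup (ZMod n)) : Subgroup (DihedralGroup n) where
  carrier := {x | ∃ i ∈ T, x = r i}
  one_mem' := ⟨0, T.zero_mem, rfl⟩
  mul_mem' := by
    rintro _ _ ⟨i, hi, rfl⟩ ⟨j, hj, rfl⟩
    exact ⟨i + j, T.add_mem hi hj, rfl⟩
  inv_mem' := by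
    rintro _ ⟨i, hi, rfl⟩
    exact ⟨-i, T.neg_mem hi, rfl⟩

lemma r_mem_rsub {T : AddSubgroup (ZMod n)} {i : ZMod n} : r i ∈ rsub T ↔ i ∈ T := by
  constructor
  · rintro ⟨j, hj, hij⟩
    obtain rfl : i = j := by injection hij
    exact hj
  · exact fun h => ⟨i, h, rfl⟩

lemma rsub_normal (T : AddSubgroup (ZMod n)) : (rsub T).Normal := by
  constructor
  rintro _ ⟨i, hi, rfl⟩ g
  have : IsConj (r i) (g * r i * g⁻¹) := isConj_iff.2 ⟨g, rfl⟩
  rcases (isConj_r_iff _ _).1 this with h | h <;> rw [h]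
  · exact ⟨i, hi, rfl⟩
  · exact ⟨-i, T.neg_mem hi, rfl⟩

lemma rsub_ne_top (T : AddSubgroup (ZMod n)) : rsub T ≠ ⊤ := by
  intro h
  have : sr 0 ∈ rsub T := h ▸ Subgroup.mem_top _
  obtain ⟨i, -, hi⟩ := this
  exact absurd hi (by simp)

lemma neg_eq_self_zero [NeZero n] (hodd : Odd n) {i : ZMod n} (h : i = -i) : i = 0 := by
  have h2 : IsUnit (2 : ZMod n) := by
    have := (ZMod.isUnit_iff_coprime 2 n).2 (Nat.coprime_two_left.2 hodd)
    simpa using this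
  have : (2 : ZMod n) * i = 2 * 0 := by ring_nf; linear_combination h
  exact h2.mul_left_cancel this

lemma two_mul_ncc_rsub [NeZero n] (hodd : Odd n) (T : AddSubgroup (ZMod n)) :
    2 * ncc (rsub T) = Nat.card T + 1 := by
  classical
  have hmem : ∀ i : ZMod n, i ∈ T → (ConjClasses.mk (r i)).carrier ⊆ ((rsub T : Subgroup _) : Set (DihedralGroup n)) := by
    intro i hi
    rw [carrier_mk_r]
    rintro x hx
    rcases hx with rfl | rfl
    · exact ⟨i, hi, rfl⟩
    · exact ⟨-i, T.neg_mem hi, rfl⟩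
  let S := {c : ConjClasses (DihedralGroup n) // c.carrier ⊆ ((rsub T : Subgroup _) : Set (DihedralGroup n))}
  let f : T → S := fun i => ⟨ConjClasses.mk (r i.1), hmem i.1 i.2⟩
  have hsurj : Function.Surjective f := by
    rintro ⟨c, hc⟩
    obtain ⟨a, rfl⟩ := c.exists_rep
    obtain ⟨i, hi, rfl⟩ := hc ConjClasses.mem_carrier_mk
    exact ⟨⟨i, hi⟩, rfl⟩
  have hf : ∀ i j : T, f i = f j ↔ (j.1 = i.1 ∨ j.1 = -i.1) := by
    intro i j
    simp only [f, S, Subtype.mk.injEq, ConjClasses.mk_eq_mk_iff_isConj, isConj_r_iff, r.injEq]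
  haveI : Finite (ConjClasses (DihedralGroup n)) := Quotient.finite _
  haveI : Fintype S := Fintype.ofFinite _
  haveI : Fintype T := Fintype.ofFinite _
  let c₀ : S := f ⟨0, T.zero_mem⟩
  have hfiber : ∀ c : S, Nat.card {i : T // f i = c} = if c = c₀ then 1 else 2 := by
    rintro c
    obtain ⟨i0, rfl⟩ := hsurj c
    by_cases h0 : i0.1 = 0
    · have hc0 : f i0 = c₀ := by
        rw [hf]; left; rw [h0]
      rw [if_pos hc0, Nat.card_eq_one_iff_unique]
      constructor
      · constructor
        rintro ⟨i, hi⟩ ⟨j, hj⟩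
        rw [hf] at hi hj
        have hi' : i.1 = 0 := by
          rcases hi with h | h
          · rw [← h, h0]
          · have : -(i.1) = 0 := by rw [← h, h0]
            simpa using this
        have hj' : j.1 = 0 := by
          rcases hj with h | h
          · rw [← h, h0]
          · have : -(j.1) = 0 := by rw [← h, h0]
            simpa using this
        exact Subtype.ext (Subtype.ext (hi'.trans hj'.symm))
      · exact ⟨⟨i0, rfl⟩⟩
    · have hc0 : f i0 ≠ c₀ := by
        show f i0 ≠ f ⟨0, T.zero_mem⟩
        simp only [ne_eq, hf]
        push_neg
        constructor
        · intro h; exact h0 h.symm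
        · intro h; apply h0; simpa using h.symm
      rw [if_neg hc0, Nat.card_eq_two_iff]
      have hne : i0.1 ≠ -i0.1 := fun h => h0 (neg_eq_self_zero hodd h)
      refine ⟨⟨i0, rfl⟩, ⟨⟨-i0.1, T.neg_mem i0.2⟩, ?_⟩, ?_, ?_⟩
      · rw [hf]; right; simp
      · intro h
        have := congrArg (fun x => (x.1 : T).1) h
        exact hne this
      · ext ⟨⟨j, hjT⟩, hj⟩
        simp only [Set.mem_insert_iff, Set.mem_singleton_iff, Set.mem_univ, iff_true]
        rw [hf] at hj
        rcases hj with h | h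
        · left; exact Subtype.ext (Subtype.ext h.symm)
        · right; exact Subtype.ext (Subtype.ext (by simpa using congrArg Neg.neg h.symm))
  have hcount : Nat.card T = ∑ c : S, Nat.card {i : T // f i = c} := by
    rw [Nat.card_congr (Equiv.sigmaFiberEquiv f).symm, Nat.card_eq_fintype_card,
      Fintype.card_sigma]
    simp [Nat.card_eq_fintype_card]
  have hsum : (∑ c : S, Nat.card {i : T // f i = c}) + 1 = 2 * Fintype.card S := by
    rw [Finset.sum_congr rfl (fun c _ => hfiber c)]
    have h1 : (∑ c : S, if c = c₀ then (1:ℕ) else 0) = 1 := by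
      rw [Finset.sum_ite_eq']; simp
    calc (∑ c : S, if c = c₀ then (1:ℕ) else 2) + 1
        = (∑ c : S, if c = c₀ then (1:ℕ) else 2) + ∑ c : S, (if c = c₀ then (1:ℕ) else 0) := by
          rw [h1]
      _ = ∑ c : S, ((if c = c₀ then (1:ℕ) else 2) + (if c = c₀ then (1:ℕ) else 0)) := by
          rw [Finset.sum_add_distrib]
      _ = ∑ _c : S, 2 := Finset.sum_congr rfl (by intro c _; split <;> rfl)
      _ = 2 * Fintype.card S := by simp [mul_comm]
  have hncc : ncc (rsub T) = Fintype.card S := Nat.card_eq_fintype_card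
  omega

lemma mem_normal_is_r [NeZero n] (hodd : Odd n) (H : Subgroup (DihedralGroup n))
    (hN : H.Normal) (hT : H ≠ ⊤) : ∀ x ∈ H, ∃ i : ZMod n, x = r i := by
  intro x hx
  rcases x with i | i
  · exact ⟨i, rfl⟩
  exfalso
  apply hT
  have h2 : IsUnit (2 : ZMod n) := by
    have := (ZMod.isUnit_iff_coprime 2 n).2 (Nat.coprime_two_left.2 hodd)
    simpa using this
  obtain ⟨u, hu⟩ := h2
  have hall : ∀ k : ZMod n, sr k ∈ H := by
    intro k
    set j : ZMod n := (↑u⁻¹ : ZMod n) * (i - k) with hj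
    have h2j : 2 * j = i - k := by
      rw [hj, ← hu, ← mul_assoc, Units.mul_inv, one_mul]
    have hc : r j * sr i * (r j)⁻¹ ∈ H := hN.conj_mem _ hx (r j)
    have heq : r j * sr i * (r j)⁻¹ = sr (i - j + -j) := rfl
    rw [heq] at hc
    have : i - j + -j = k := by linear_combination -h2j
    rwa [this] at hc
  ext y
  simp only [Subgroup.mem_top, iff_true]
  rcases y with m | m
  · have := H.mul_mem (hall 0) (hall m)
    simpa using this
  · exact hall m


/-- For odd `n ≥ 3`, every proper normal subgroup of the dihedral group `D_{2n}` is contained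
in `⟨a⟩`, and `D_{2n}` is `X`-decomposable for `X = {(d+1)/2 : d ∣ n}`. -/
theorem dihedral_odd_decomposable (n : ℕ) (hn : 3 ≤ n) (hodd : Odd n) :
    (∀ H : Subgroup (DihedralGroup n), H.Normal → H ≠ ⊤ →
      H ≤ Subgroup.zpowers (DihedralGroup.r (1 : ZMod n))) ∧
    XDecomposable (DihedralGroup n) {m : ℕ | ∃ d : ℕ, d ∣ n ∧ m = (d + 1) / 2} := by
  haveI : NeZero n := ⟨by omega⟩
  have hle : ∀ H : Subgroup (DihedralGroup n), H.Normal → H ≠ ⊤ →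
      H ≤ Subgroup.zpowers (DihedralGroup.r (1 : ZMod n)) := by
    intro H hN hT x hx
    obtain ⟨i, rfl⟩ := mem_normal_is_r hodd H hN hT x hx
    refine Subgroup.mem_zpowers_iff.2 ⟨(i.val : ℤ), ?_⟩
    rw [zpow_natCast, r_one_pow]
    simp [ZMod.natCast_val, ZMod.cast_id]
  refine ⟨hle, ?_⟩
  unfold XDecomposable KG
  ext m
  simp only [Set.mem_setOf_eq]
  constructor
  · rintro ⟨A, hN, hT, rfl⟩
    set T : AddSubgroup (ZMod n) :=
      { carrier := {i | r i ∈ A}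
        zero_mem' := by show r 0 ∈ A; rw [← one_def]; exact A.one_mem
        add_mem' := by
          intro a b ha hb
          show r (a + b) ∈ A
          rw [← r_mul_r]; exact A.mul_mem ha hb
        neg_mem' := by
          intro a ha
          show r (-a) ∈ A
          rw [← r_inv]; exact A.inv_mem ha } with hTdef
    have hA : A = rsub T := by
      ext x
      constructor
      · intro hx
        obtain ⟨i, rfl⟩ := mem_normal_is_r hodd A hN hT x hx
        exact ⟨i, hx, rfl⟩
      · rintro ⟨i, hi, rfl⟩
        exact hi
    refine ⟨Nat.card T, ?_, ?_⟩
    · have := AddSubgroup.card_addSubgroup_dvd_card T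
      rwa [Nat.card_zmod] at this
    · have h2 := two_mul_ncc_rsub hodd T
      rw [hA]
      omega
  · rintro ⟨d, hd, rfl⟩
    set T : AddSubgroup (ZMod n) := AddSubgroup.zmultiples ((↑(n / d) : ZMod n)) with hTdef
    have hdn : d ≠ 0 := by rintro rfl; simp at hd; omega
    have hcard : Nat.card T = d := by
      rw [hTdef, Nat.card_zmultiples, ZMod.addOrderOf_coe _ (by omega : n ≠ 0),
        Nat.gcd_eq_right (Nat.div_dvd_of_dvd hd), Nat.div_div_self hd (by omega)]
    refine ⟨rsub T, rsub_normal T, rsub_ne_top T, ?_⟩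
    have h2 := two_mul_ncc_rsub hodd T
    rw [hcard] at h2
    omega

end Aux
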